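/- The subgroup ⟨x, y⟩ ≅ C₄ × C₄ of G(4,4,3) forces μ(G(4,4,3)) ≥ 8, and the embedding G(4,4,3) ≤ C₄ ≀ Sym(3) gives μ(G(4,4,3)) ≤ 12. -/

import Mathlib

open Multiplicative

/-- Cyclic group of order m, multiplicatively. -/
abbrev Cyc (m : ℕ) := Multiplicative (ZMod m)

/-- Minimal faithful permutation degree. -/
noncomputable def mu (G : Type*) [Group G] : ℕ :=
  sInf {n | ∃ f : G →* Equiv.Perm (Fin n), Function.Injective f}

/-- Sym(n) acting on the base group (C_m)^n by permuting coordinates. -/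
def wreathAut (m n : ℕ) : Equiv.Perm (Fin n) →* MulAut (Fin n → Cyc m) where
  toFun σ :=
    { toFun := fun θ => θ ∘ σ.symm
      invFun := fun θ => θ ∘ σ
      left_inv := fun θ => by ext i; simp
      right_inv := fun θ => by ext i; simp
      map_mul' := fun θ₁ θ₂ => rfl }
  map_one' := by ext θ i; rfl
  map_mul' := fun σ τ => by ext θ i; rfl

/-- The wreath product C_m ≀ Sym(n). -/
abbrev Wr (m n : ℕ) := SemidirectProduct (Fin n → Cyc m) (Equiv.Perm (Fin n)) (wreathAut m n)

/-- A(m,p,n) = {θ ∈ (C_m)^n | (θ₁⋯θₙ)^{m/p} = 1}. -/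
def Apn (m p n : ℕ) : Subgroup (Fin n → Cyc m) where
  carrier := {θ | (∏ i, θ i) ^ (m / p) = 1}
  one_mem' := by simp
  mul_mem' := by
    intro α β hα hβ
    simp only [Set.mem_setOf_eq, Pi.mul_apply] at *
    rw [Finset.prod_mul_distrib, mul_pow, hα, hβ, one_mul]
  inv_mem' := by
    intro α hα
    simp only [Set.mem_setOf_eq, Pi.inv_apply] at *
    rw [Finset.prod_inv_distrib, inv_pow, hα, inv_one]

lemma apn_act_mem {m p n : ℕ} (σ : Equiv.Perm (Fin n)) {θ : Fin n → Cyc m}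
    (hθ : θ ∈ Apn m p n) : wreathAut m n σ θ ∈ Apn m p n := by
  have : ∏ i, θ (σ.symm i) = ∏ i, θ i := Equiv.prod_comp σ.symm θ
  simpa [Apn, wreathAut, Subgroup.mem_mk, Set.mem_setOf_eq, Function.comp, this] using hθ

/-- G(m,p,n) = A(m,p,n) ⋊ Sym(n), realized inside C_m ≀ Sym(n). -/
def Gmpn (m p n : ℕ) : Subgroup (Wr m n) where
  carrier := {g | g.left ∈ Apn m p n}
  one_mem' := by
    show (1 : Wr m n).left ∈ Apn m p n
    rw [SemidirectProduct.one_left]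
    exact one_mem _
  mul_mem' := by
    intro g h hg hh
    show (g * h).left ∈ Apn m p n
    rw [SemidirectProduct.mul_left]
    exact mul_mem hg (apn_act_mem g.right hh)
  inv_mem' := by
    intro g hg
    show g⁻¹.left ∈ Apn m p n
    rw [SemidirectProduct.inv_left]
    exact apn_act_mem _ (inv_mem hg)

/-! ### Auxiliary material -/

instance apnDec : DecidablePred (· ∈ Apn 4 4 3) :=
  fun θ => decidable_of_iff ((∏ i, θ i) ^ (4 / 4) = 1) Iff.rfl

/-- `G(4,4,3)` is in bijection with `A(4,4,3) × Sym(3)`. -/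
def eG : (Gmpn 4 4 3) ≃ (Apn 4 4 3) × Equiv.Perm (Fin 3) where
  toFun g := (⟨g.1.left, g.2⟩, g.1.right)
  invFun p := ⟨⟨p.1.1, p.2⟩, p.1.2⟩
  left_inv g := rfl
  right_inv p := rfl

lemma cardApn : Nat.card (Apn 4 4 3) = 16 := by
  rw [Nat.card_eq_fintype_card]; decide

lemma cardG : Nat.card (Gmpn 4 4 3) = 96 := by
  rw [Nat.card_congr eG, Nat.card_prod, cardApn, Nat.card_eq_fintype_card]
  simp [Fintype.card_perm]; rfl

/-- The imprimitive action of the wreath product on 3 blocks of size 4. -/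
def rep : Wr 4 3 →* Equiv.Perm (Fin 3 × Cyc 4) where
  toFun g :=
    { toFun := fun p => (g.right p.1, g.left (g.right p.1) * p.2)
      invFun := fun p => (g.right.symm p.1, (g.left p.1)⁻¹ * p.2)
      left_inv := fun p => by simp
      right_inv := fun p => by simp }
  map_one' := by
    ext p <;> simp
  map_mul' g h := by
    ext p <;>
      simp [SemidirectProduct.mul_left, SemidirectProduct.mul_right, wreathAut, mul_assoc]

lemma rep_inj : Function.Injective (rep) := by
  rw [injective_iff_map_eq_one]
  intro g hg
  have h1 : ∀ p : Fin 3 × Cyc 4, rep g p = p := fun p => by rw [hg]; rfl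
  have hr : g.right = 1 := Equiv.ext fun i => congrArg Prod.fst (h1 (i, 1))
  have hl : g.left = 1 := funext fun i => by
    have h2 := congrArg Prod.snd (h1 (i, 1))
    simp only [rep, hr] at h2
    simpa [hr] using h2
  ext1
  · rw [hl]; simp
  · rw [hr]; simp

noncomputable def e12 : (Fin 3 × Cyc 4) ≃ Fin 12 :=
  Fintype.equivFinOfCardEq (by decide)

open scoped Classical in
noncomputable def big : Gmpn 4 4 3 →* Equiv.Perm (Fin 12) :=
  (Equiv.Perm.viaEmbeddingHom e12.toEmbedding).comp (rep.comp (Gmpn 4 4 3).subtype)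

open scoped Classical in
lemma big_inj : Function.Injective big :=
  (Equiv.Perm.viaEmbeddingHom_injective e12.toEmbedding).comp
    (rep_inj.comp (Gmpn 4 4 3).subtype_injective)

/-- The C4 × C4 inside G(4,4,3). -/
def psi : (Cyc 4 × Cyc 4) →* Gmpn 4 4 3 where
  toFun p := ⟨⟨![p.1, p.2, (p.1 * p.2)⁻¹], 1⟩, by
    show (∏ i, (![p.1, p.2, (p.1 * p.2)⁻¹]) i) ^ (4 / 4) = 1
    simp [Fin.prod_univ_three]⟩
  map_one' := by
    apply Subtype.ext
    ext1
    · funext i; fin_cases i <;> simp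
    · rfl
  map_mul' p q := by
    apply Subtype.ext
    ext1
    · rw [Subgroup.coe_mul, SemidirectProduct.mul_left]
      funext i
      fin_cases i <;>
        simp [SemidirectProduct.mul_left, wreathAut, Equiv.Perm.one_symm, mul_mul_mul_comm, mul_inv, mul_comm, mul_left_comm, mul_assoc]
    · rfl

lemma psi_inj : Function.Injective psi := by
  rw [injective_iff_map_eq_one]
  intro p hp
  have h : (psi p).1.left = (1 : Wr 4 3).left := congrArg _ (congrArg Subtype.val hp)
  rw [SemidirectProduct.one_left] at h
  have h0 := congrFun h 0
  have h1 := congrFun h 1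
  simp [psi] at h0 h1
  exact Prod.ext h0 h1

theorem stmt19 :
    (∃ B : Subgroup (Gmpn 4 4 3), Nonempty (B ≃* (Cyc 4 × Cyc 4))) ∧
    8 ≤ mu (Gmpn 4 4 3) ∧
    (∃ f : Gmpn 4 4 3 →* Wr 4 3, Function.Injective f) ∧
    mu (Gmpn 4 4 3) ≤ 12 := by
  have h12 : 12 ∈ {n | ∃ f : Gmpn 4 4 3 →* Equiv.Perm (Fin n), Function.Injective f} :=
    ⟨big, big_inj⟩
  refine ⟨⟨psi.range, ⟨(MonoidHom.ofInjective psi_inj).symm⟩⟩, ?_, ⟨(Gmpn 4 4 3).subtype,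
    (Gmpn 4 4 3).subtype_injective⟩, Nat.sInf_le h12⟩
  apply le_csInf ⟨12, h12⟩
  rintro n ⟨f, hf⟩
  by_contra hn
  push_neg at hn
  have hd : Nat.card (Gmpn 4 4 3) ∣ Nat.card (Equiv.Perm (Fin n)) :=
    Subgroup.card_dvd_of_injective f hf
  rw [cardG, Nat.card_eq_fintype_card, Fintype.card_perm, Fintype.card_fin] at hd
  have h5040 : (96 : ℕ) ∣ 5040 :=
    hd.trans (by exact_mod_cast Nat.factorial_dvd_factorial (show n ≤ 7 by omega))
  norm_num at h5040
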